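/- arXiv:1705.03980 — 14 statements merged into one kernel-verified Lean document; each statement's English description precedes it below -/
import Mathlib

section
/- Let R be a commutative ring and M an R-module with trivial annihilator, i.e., Ann_R(M) = (0). Then M is an Auslander R-module: every zero-divisor of R is a zero-divisor on M. -/
/-- `Z_R(M)`: the set of zero-divisors of `R` on the `R`-module `M`, i.e. those `r : R`
for which there exists a nonzero `m : M` with `r • m = 0`. -/
def zeroDivisorsOn (R : Type*) [CommRing R] (M : Type*) [AddCommGroup M] [Module R M] :
    Set R :=
  {r : R | ∃ m : M, m ≠ 0 ∧ r • m = 0}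

/-- A module with trivial annihilator is an Auslander module. -/
theorem faithful_auslander (R : Type*) [CommRing R]
    (M : Type*) [AddCommGroup M] [Module R M]
    (hann : Module.annihilator R M = ⊥) :
    zeroDivisorsOn R R ⊆ zeroDivisorsOn R M := by
  rintro r ⟨s, hs, hrs⟩
  have hs' : s ∉ Module.annihilator R M := by
    rw [hann]; simpa using hs
  rw [Module.mem_annihilator] at hs'
  push_neg at hs'
  obtain ⟨m, hm⟩ := hs'
  refine ⟨s • m, hm, ?_⟩
  rw [← mul_smul, ← smul_eq_mul, hrs, zero_smul]
end

section
/- Let R be a commutative ring and M an R-module with Ann_R(M) = (0) (equivalently, for every nonzero s ∈ R there is an x ∈ M with s • x ≠ 0). Then the R-module Hom_R(M, M) of R-linear endomorphisms of M is an Auslander R-module: every zero-divisor of R is a zero-divisor on Hom_R(M, M). -/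
/-- If `Ann_R(M) = 0`, then `Hom_R(M, M)` is an Auslander `R`-module. -/
theorem hom_auslander (R : Type*) [CommRing R]
    (M : Type*) [AddCommGroup M] [Module R M]
    (hann : Module.annihilator R M = ⊥) :
    zeroDivisorsOn R R ⊆ zeroDivisorsOn R (M →ₗ[R] M) := by
  rintro r ⟨s, hs, hrs⟩
  refine ⟨s • LinearMap.id, ?_, ?_⟩
  · intro h
    apply hs
    rw [← Submodule.mem_bot R, ← hann, Module.mem_annihilator]
    intro m
    have := congrArg (fun f : M →ₗ[R] M => f m) h
    simpa using this
  · ext m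
    have h0 : r * s = 0 := by simpa [smul_eq_mul] using hrs
    simp [smul_smul, h0]
end

section
/- Let R be a commutative ring and {M_i}_{i ∈ Λ} a family of R-modules. If there is an index i₀ ∈ Λ such that M_{i₀} is an Auslander R-module, then the direct sum ⨁_{i ∈ Λ} M_i is an Auslander R-module. -/
open DirectSum

/-- If some member of a family of modules is Auslander, then the direct sum is Auslander. -/
theorem directSum_auslander (R : Type*) [CommRing R]
    {ι : Type*} [DecidableEq ι] (M : ι → Type*)
    [∀ i, AddCommGroup (M i)] [∀ i, Module R (M i)] (i₀ : ι)
    (h : zeroDivisorsOn R R ⊆ zeroDivisorsOn R (M i₀)) :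
    zeroDivisorsOn R R ⊆ zeroDivisorsOn R (⨁ i, M i) := by
  intro r hr
  obtain ⟨m, hm, hrm⟩ := h hr
  refine ⟨DirectSum.of M i₀ m, ?_, ?_⟩
  · intro hz
    apply hm
    have := congrArg (fun x => x i₀) hz
    simpa using this
  · rw [← DirectSum.of_smul, hrm, map_zero]
end

section
/- Let R be a commutative ring and {M_i}_{i ∈ Λ} a family of R-modules. If there is an index i₀ ∈ Λ such that M_{i₀} is an Auslander R-module, then the direct product ∏_{i ∈ Λ} M_i is an Auslander R-module. -/
/-- If some member of a family of modules is Auslander, then the direct product is Auslander. -/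
theorem directProd_auslander (R : Type*) [CommRing R]
    {ι : Type*} (M : ι → Type*)
    [∀ i, AddCommGroup (M i)] [∀ i, Module R (M i)] (i₀ : ι)
    (h : zeroDivisorsOn R R ⊆ zeroDivisorsOn R (M i₀)) :
    zeroDivisorsOn R R ⊆ zeroDivisorsOn R (∀ i, M i) := by
  classical
  intro r hr
  obtain ⟨m, hm, hrm⟩ := h hr
  refine ⟨Pi.single i₀ m, fun H => hm ?_, ?_⟩
  · have := congrFun H i₀
    simpa using this
  · funext i
    by_cases hi : i = i₀
    · subst hi; simp [hrm]
    · simp [Pi.single_eq_of_ne hi]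
end

section
/- Let R be a commutative ring, M an Auslander R-module, and S a multiplicatively closed subset of R such that no element of S is a zero-divisor on M (i.e., S ⊆ R − Z_R(M)). Then the localized module M_S is an Auslander module over the localized ring R_S, i.e., Z_{R_S}(R_S) ⊆ Z_{R_S}(M_S). -/
/-- Localizing an Auslander module at a multiplicative set avoiding `Z_R(M)` yields an
Auslander module over the localized ring. -/
theorem localization_auslander (R : Type*) [CommRing R]
    (M : Type*) [AddCommGroup M] [Module R M]
    (hM : zeroDivisorsOn R R ⊆ zeroDivisorsOn R M)
    (S : Submonoid R) (hS : ∀ s ∈ S, s ∉ zeroDivisorsOn R M) :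
    zeroDivisorsOn (Localization S) (Localization S) ⊆
      zeroDivisorsOn (Localization S) (LocalizedModule S M) := by
  rintro x ⟨y, hy, hxy⟩
  induction x using Localization.induction_on with
  | H p =>
  obtain ⟨r, s⟩ := p
  induction y using Localization.induction_on with
  | H q =>
  obtain ⟨a, t⟩ := q
  have ha : a ≠ 0 := by
    rintro rfl
    exact hy (Localization.mk_zero t)
  rw [smul_eq_mul] at hxy
  rw [Localization.mk_mul, ← Localization.mk_zero (s * t), Localization.mk_eq_mk_iff,
    Localization.r_iff_exists] at hxy
  obtain ⟨u, hu⟩ := hxy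
  simp only [mul_zero, zero_mul] at hu
  have hzd : ((u * (s * t) : S) : R) * r ∈ zeroDivisorsOn R R :=
    ⟨a, ha, by push_cast; rw [smul_eq_mul]; push_cast at hu; linear_combination hu⟩
  obtain ⟨m, hm, hrm⟩ := hM hzd
  refine ⟨LocalizedModule.mk m 1, ?_, ?_⟩
  · intro h
    rw [show (0 : LocalizedModule S M) = LocalizedModule.mk 0 1 from
      (LocalizedModule.zero_mk 1).symm, LocalizedModule.mk_eq] at h
    obtain ⟨v, hv⟩ := h
    simp only [one_smul, smul_zero] at hv
    exact hS _ v.2 ⟨m, hm, hv⟩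
  · rw [LocalizedModule.mk_smul_mk, show (0 : LocalizedModule S M) = LocalizedModule.mk 0 1 from
      (LocalizedModule.zero_mk 1).symm, LocalizedModule.mk_eq]
    refine ⟨u * (s * t), ?_⟩
    simp only [one_smul, smul_zero, Submonoid.smul_def, ← mul_smul]
    rw [← hrm]
end

section
/- Let R be a commutative ring and M an R-module having property (A). Then the polynomial module M[X] (sequences of elements of M with finite support, viewed as a module over the polynomial ring R[X]) is an Auslander R[X]-module if and only if M is an Auslander R-module. -/
/-- An `R`-module `M` has property (A) if every finitely generated ideal `I ⊆ Z_R(M)`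
has a nonzero annihilator in `M`. -/
def hasPropertyA (R : Type*) [CommRing R] (M : Type*) [AddCommGroup M] [Module R M] :
    Prop :=
  ∀ I : Ideal R, I.FG → (I : Set R) ⊆ zeroDivisorsOn R M →
    ∃ m : M, m ≠ 0 ∧ ∀ r ∈ I, r • m = 0

/-- If `M` has property (A), then `M[X]` is an Auslander `R[X]`-module iff `M` is an
Auslander `R`-module. -/
theorem polynomialModule_auslander_iff (R : Type*) [CommRing R]
    (M : Type*) [AddCommGroup M] [Module R M]
    (hA : hasPropertyA R M) :
    (zeroDivisorsOn (Polynomial R) (Polynomial R) ⊆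
        zeroDivisorsOn (Polynomial R) (PolynomialModule R M)) ↔
      zeroDivisorsOn R R ⊆ zeroDivisorsOn R M := by
  constructor
  · -- M[X] Auslander ⇒ M Auslander
    intro h r hr
    obtain ⟨s, hs, hrs⟩ := hr
    have hCr : (Polynomial.C r : Polynomial R) ∈
        zeroDivisorsOn (Polynomial R) (Polynomial R) := by
      refine ⟨Polynomial.C s, by simpa using hs, ?_⟩
      rw [smul_eq_mul, ← Polynomial.C_mul, ← smul_eq_mul, hrs, Polynomial.C_0]
    obtain ⟨p, hp, hCrp⟩ := h hCr
    obtain ⟨n, hn⟩ : ∃ n, p.coeff n ≠ 0 := by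
      by_contra hc
      push_neg at hc
      exact hp (PolynomialModule.ext (Finsupp.ext hc))
    refine ⟨p.coeff n, hn, ?_⟩
    have key : (Polynomial.C r • p).coeff n = 0 := by rw [hCrp]; rfl
    rw [PolynomialModule.smul_apply, Finset.sum_eq_single (0, n)] at key
    · simpa using key
    · intro b hb hne
      rcases b with ⟨i, j⟩
      rw [Finset.HasAntidiagonal.mem_antidiagonal] at hb
      rcases Nat.eq_zero_or_pos i with hi | hi
      · subst hi
        obtain rfl : j = n := by simpa using hb
        exact absurd rfl hne
      · rw [Polynomial.coeff_C, if_neg (by omega), zero_smul]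
    · simp [Polynomial.coeff_C]
  · -- M Auslander ⇒ M[X] Auslander
    intro h f hf
    obtain ⟨g, hg, hfg⟩ := hf
    rw [smul_eq_mul] at hfg
    -- McCoy: ∃ c ≠ 0, c • f = 0
    have hfz : f ∉ nonZeroDivisors (Polynomial R) := fun hmem =>
      hg (hmem.2 g (by rwa [mul_comm]))
    obtain ⟨c, hc, hcf⟩ := Polynomial.notMem_nonZeroDivisors_iff.mp hfz
    -- the ideal generated by the coefficients of f
    set I : Ideal R := Ideal.span (f.coeffs : Set R) with hI
    have hann : ∀ r ∈ I, r * c = 0 := by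
      intro r hrI
      have hle : I ≤ LinearMap.ker (LinearMap.toSpanSingleton R R c) := by
        rw [hI, Ideal.span_le]
        intro a ha
        rw [Finset.mem_coe, Polynomial.mem_coeffs_iff] at ha
        obtain ⟨k, -, rfl⟩ := ha
        have := congrArg (fun q => Polynomial.coeff q k) hcf
        simpa [mul_comm, LinearMap.mem_ker] using this
      have := hle hrI
      simpa [LinearMap.mem_ker, smul_eq_mul] using this
    have hIZ : (I : Set R) ⊆ zeroDivisorsOn R M :=
      fun r hrI => h ⟨c, hc, by rw [smul_eq_mul]; exact hann r hrI⟩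
    obtain ⟨m, hm, hmann⟩ := hA I ⟨f.coeffs, rfl⟩ hIZ
    refine ⟨PolynomialModule.single R 0 m, ?_, ?_⟩
    · intro hz
      apply hm
      have := congrArg (fun q => q.coeff 0) hz
      simpa using this
    · refine PolynomialModule.ext (Finsupp.ext fun n => ?_)
      rw [PolynomialModule.smul_single_apply, if_pos (Nat.zero_le n), Nat.sub_zero]
      rcases eq_or_ne (f.coeff n) 0 with hk | hk
      · simp [hk]
      · exact (show (0 : PolynomialModule R M).coeff n = 0 from rfl) ▸
          hmann _ (Ideal.subset_span (f.coeff_mem_coeffs hk))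
end

section
/- Let R be a commutative Noetherian ring and let f, g ∈ R[[X]] be formal power series with f·g = 0 and g ≠ 0. Then there is a nonzero constant r ∈ R such that f · r = 0 in R[[X]] (equivalently, r annihilates every coefficient of f). -/
/-- McCoy-type theorem for power series over a Noetherian ring: if `f * g = 0` with
`g ≠ 0` in `R[[X]]`, then `f` is annihilated by some nonzero constant `r ∈ R`. -/
theorem powerSeries_mcCoy (R : Type*) [CommRing R] [IsNoetherianRing R]
    (f g : PowerSeries R) (hfg : f * g = 0) (hg : g ≠ 0) :
    ∃ r : R, r ≠ 0 ∧ f * PowerSeries.C r = 0 := by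
  classical
  have stab : ∀ F : ℕ →o Submodule R R, ∃ n, ∀ m, n ≤ m → F n = F m :=
    monotone_stabilizes_iff_noetherian.mpr inferInstance
  set a : ℕ → R := fun i => PowerSeries.coeff i f with ha
  -- existence of a nonzero coefficient
  have exCoeff : ∀ h : PowerSeries R, h ≠ 0 → ∃ m, PowerSeries.coeff m h ≠ 0 := by
    intro h h0
    by_contra hco
    push_neg at hco
    exact h0 (PowerSeries.ext fun k => by simpa using hco k)
  -- trailing coefficient lemma
  have trail : ∀ n : ℕ, ∀ h : PowerSeries R, h ≠ 0 → f * h = 0 →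
      (∀ i, i < n → ∀ j, a i * PowerSeries.coeff j h = 0) →
      ∃ m, PowerSeries.coeff m h ≠ 0 ∧ a n * PowerSeries.coeff m h = 0 := by
    intro n h h0 hf hc
    have hex := exCoeff h h0
    refine ⟨Nat.find hex, Nat.find_spec hex, ?_⟩
    set m := Nat.find hex with hm
    have hlow : ∀ k, k < m → PowerSeries.coeff k h = 0 := by
      intro k hk
      have := Nat.find_min hex hk
      simpa using this
    have h1 : PowerSeries.coeff (m + n) (f * h) = 0 := by rw [hf]; simp
    rw [PowerSeries.coeff_mul, Finset.sum_eq_single (n, m)] at h1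
    · simpa [ha] using h1
    · rintro ⟨i, j⟩ hmem hne
      have hij : i + j = m + n := Finset.HasAntidiagonal.mem_antidiagonal.mp hmem
      rcases lt_or_ge i n with hi | hi
      · simpa [ha] using hc i hi j
      · have hcase : j < m ∨ (i = n ∧ j = m) := by omega
        rcases hcase with hj | ⟨hi', hj'⟩
        · simp [hlow j hj]
        · exact absurd (by rw [hi', hj']) hne
    · intro hnot
      exact absurd (Finset.HasAntidiagonal.mem_antidiagonal.mpr (by omega)) hnot
  -- main induction: witnesses annihilated coefficientwise by a 0, ..., a (n-1)
  have key : ∀ n : ℕ, ∃ h : PowerSeries R, h ≠ 0 ∧ f * h = 0 ∧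
      ∀ i, i < n → ∀ j, a i * PowerSeries.coeff j h = 0 := by
    intro n
    induction n with
    | zero => exact ⟨g, hg, hfg, fun i hi => absurd hi (Nat.not_lt_zero i)⟩
    | succ n ih =>
      obtain ⟨h, h0, hf, hc⟩ := ih
      by_cases hE : ∃ t, PowerSeries.C ((a n) ^ t) * h = 0
      · -- minimal t with C (a n ^ t) * h = 0; it is positive
        have ht0 : Nat.find hE ≠ 0 := by
          intro h'
          have := Nat.find_spec hE
          rw [h'] at this
          simp only [pow_zero, map_one, one_mul] at this
          exact h0 this
        obtain ⟨s, hs⟩ := Nat.exists_eq_succ_of_ne_zero ht0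
        have hprev : PowerSeries.C ((a n) ^ s) * h ≠ 0 :=
          Nat.find_min hE (by omega)
        have htspec : PowerSeries.C ((a n) ^ (s + 1)) * h = 0 := by
          have h2 := Nat.find_spec hE
          rw [hs] at h2
          exact h2
        refine ⟨PowerSeries.C ((a n) ^ s) * h, hprev, ?_, ?_⟩
        · calc f * (PowerSeries.C ((a n) ^ s) * h)
              = PowerSeries.C ((a n) ^ s) * (f * h) := by ring
            _ = 0 := by rw [hf, mul_zero]
        · intro i hi j
          rw [PowerSeries.coeff_C_mul]
          rcases lt_or_ge i n with h' | h'
          · calc a i * ((a n) ^ s * PowerSeries.coeff j h)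
                = (a n) ^ s * (a i * PowerSeries.coeff j h) := by ring
              _ = 0 := by rw [hc i h' j, mul_zero]
          · have : i = n := by omega
            subst this
            have hz : PowerSeries.coeff j (PowerSeries.C ((a i) ^ (s + 1)) * h) = 0 := by
              rw [htspec]; simp
            rw [PowerSeries.coeff_C_mul] at hz
            calc a i * ((a i) ^ s * PowerSeries.coeff j h)
                = (a i) ^ (s + 1) * PowerSeries.coeff j h := by ring
              _ = 0 := hz
      · push_neg at hE
        exfalso
        -- ACC on annihilators of powers of a n
        have mono : Monotone (fun t : ℕ =>
            LinearMap.ker (LinearMap.mulLeft R ((a n) ^ t))) := by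
          intro s t hst b hb
          rw [LinearMap.mem_ker, LinearMap.mulLeft_apply] at hb ⊢
          obtain ⟨k, rfl⟩ := Nat.exists_eq_add_of_le hst
          calc (a n) ^ (s + k) * b = (a n) ^ k * ((a n) ^ s * b) := by ring
            _ = 0 := by rw [hb, mul_zero]
        obtain ⟨T, hT⟩ := stab ⟨_, mono⟩
        have h'0 : PowerSeries.C ((a n) ^ T) * h ≠ 0 := hE T
        have hf' : f * (PowerSeries.C ((a n) ^ T) * h) = 0 := by
          calc f * (PowerSeries.C ((a n) ^ T) * h)
              = PowerSeries.C ((a n) ^ T) * (f * h) := by ring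
            _ = 0 := by rw [hf, mul_zero]
        have hc' : ∀ i, i < n → ∀ j,
            a i * PowerSeries.coeff j (PowerSeries.C ((a n) ^ T) * h) = 0 := by
          intro i hi j
          rw [PowerSeries.coeff_C_mul]
          calc a i * ((a n) ^ T * PowerSeries.coeff j h)
              = (a n) ^ T * (a i * PowerSeries.coeff j h) := by ring
            _ = 0 := by rw [hc i hi j, mul_zero]
        obtain ⟨m, hm, hanm⟩ := trail n _ h'0 hf' hc'
        rw [PowerSeries.coeff_C_mul] at hm hanm
        have hmem : PowerSeries.coeff m h ∈
            LinearMap.ker (LinearMap.mulLeft R ((a n) ^ (T + 1))) := by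
          rw [LinearMap.mem_ker, LinearMap.mulLeft_apply]
          calc (a n) ^ (T + 1) * PowerSeries.coeff m h
              = a n * ((a n) ^ T * PowerSeries.coeff m h) := by ring
            _ = 0 := hanm
        have heq := hT (T + 1) (by omega)
        simp only [OrderHom.coe_mk] at heq
        rw [← heq] at hmem
        rw [LinearMap.mem_ker, LinearMap.mulLeft_apply] at hmem
        exact hm hmem
  -- stabilization of the span of the coefficients of f
  have mono2 : Monotone (fun k : ℕ => Submodule.span R (a '' Set.Iic k)) := by
    intro s t hst
    exact Submodule.span_mono (Set.image_mono (Set.Iic_subset_Iic.mpr hst))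
  obtain ⟨N, hN⟩ := stab ⟨_, mono2⟩
  obtain ⟨h, h0, hf, hc⟩ := key (N + 1)
  obtain ⟨m, hm⟩ := exCoeff h h0
  refine ⟨PowerSeries.coeff m h, hm, ?_⟩
  ext k
  rw [PowerSeries.coeff_mul_C, map_zero]
  -- every a k lies in the span of a 0, ..., a N
  have hk : a k ∈ Submodule.span R (a '' Set.Iic N) := by
    have h1 : a k ∈ Submodule.span R (a '' Set.Iic (max k N)) :=
      Submodule.subset_span ⟨k, Set.mem_Iic.mpr (le_max_left _ _), rfl⟩
    have heq := hN (max k N) (le_max_right _ _)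
    simp only [OrderHom.coe_mk] at heq
    rw [← heq] at h1
    exact h1
  have hsub : Submodule.span R (a '' Set.Iic N) ≤
      LinearMap.ker (LinearMap.mulLeft R (PowerSeries.coeff m h)) := by
    rw [Submodule.span_le]
    rintro x ⟨i, hi, rfl⟩
    rw [SetLike.mem_coe, LinearMap.mem_ker, LinearMap.mulLeft_apply, mul_comm]
    exact hc i (Nat.lt_succ_of_le (Set.mem_Iic.mp hi)) m
  have := hsub hk
  rw [LinearMap.mem_ker, LinearMap.mulLeft_apply, mul_comm] at this
  exact this
end

section
/- Let R be a commutative ring, M an Auslander R-module having property (A), and B a commutative R-algebra that is faithfully flat as an R-module. For f ∈ B, define the content c(f) to be the intersection of all ideals I of R such that f ∈ IB. Assume: (i) B is an Ohm-Rush R-algebra, i.e., f ∈ c(f)B for every f ∈ B; (ii) c(f) is a finitely generated ideal of R for every f ∈ B; (iii) B is a McCoy R-algebra, i.e., whenever f·g = 0 in B with g ≠ 0, there is a nonzero r ∈ R with c(f)·r = (0). Then the B-module M ⊗_R B is an Auslander B-module, i.e., Z_B(B) ⊆ Z_B(M ⊗_R B). -/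
/-- The content `c(f)` of an element `f` of an `R`-algebra `B`: the intersection of all
ideals `I` of `R` such that `f ∈ IB`. -/
noncomputable def algContent (R : Type*) (B : Type*) [CommRing R] [CommRing B]
    [Algebra R B] (f : B) : Ideal R :=
  sInf {I : Ideal R | f ∈ Ideal.map (algebraMap R B) I}

open TensorProduct

/-- For faithfully flat `B`, the map `m ↦ 1 ⊗ m` is injective on nonzero elements. -/
lemma one_tmul_ne_zero (R : Type*) [CommRing R]
    (M : Type*) [AddCommGroup M] [Module R M]
    (B : Type*) [CommRing B] [Algebra R B]
    (hff : Module.FaithfullyFlat R B) {m : M} (hm : m ≠ 0) :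
    (1 : B) ⊗ₜ[R] m ≠ 0 := by
  intro h0
  set N : Submodule R M := Submodule.span R {m} with hN
  have hmem : m ∈ N := Submodule.mem_span_singleton_self m
  have hinj : Function.Injective (LinearMap.lTensor B N.subtype) :=
    Module.Flat.lTensor_preserves_injective_linearMap _ N.injective_subtype
  have h1 : (1 : B) ⊗ₜ[R] (⟨m, hmem⟩ : N) = 0 := by
    apply hinj
    simp only [LinearMap.lTensor_tmul, Submodule.coe_subtype, map_zero]
    exact h0
  have hsub : Subsingleton (B ⊗[R] (N : Type _)) := by
    refine subsingleton_of_forall_eq 0 fun x => ?_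
    induction x using TensorProduct.induction_on with
    | zero => rfl
    | tmul b n =>
      obtain ⟨r, hr⟩ := Submodule.mem_span_singleton.1 n.2
      have : n = r • (⟨m, hmem⟩ : N) := Subtype.ext (by simpa using hr.symm)
      have hb : b ⊗ₜ[R] (⟨m, hmem⟩ : N) = b • ((1:B) ⊗ₜ[R] (⟨m, hmem⟩ : N)) := by
        rw [smul_tmul', smul_eq_mul, mul_one]
      rw [this, tmul_smul, hb, h1, smul_zero, smul_zero]
    | add x y hx hy => rw [hx, hy, add_zero]
  have : Subsingleton (N : Type _) :=
    Module.FaithfullyFlat.lTensor_reflects_triviality R B N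
  exact hm (by simpa using congrArg Subtype.val (Subsingleton.elim (⟨m, hmem⟩ : N) 0))

/-- If `M` is an Auslander `R`-module with property (A) and `B` is a faithfully flat
McCoy (Ohm-Rush) `R`-algebra, then `M ⊗_R B` is an Auslander `B`-module. -/
theorem tensor_auslander (R : Type*) [CommRing R]
    (M : Type*) [AddCommGroup M] [Module R M]
    (B : Type*) [CommRing B] [Algebra R B]
    (hM : zeroDivisorsOn R R ⊆ zeroDivisorsOn R M)
    (hA : hasPropertyA R M)
    (hff : Module.FaithfullyFlat R B)
    (hOhmRush : ∀ f : B, f ∈ Ideal.map (algebraMap R B) (algContent R B f))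
    (hFG : ∀ f : B, (algContent R B f).FG)
    (hMcCoy : ∀ f g : B, f * g = 0 → g ≠ 0 →
      ∃ r : R, r ≠ 0 ∧ ∀ a ∈ algContent R B f, a * r = 0) :
    zeroDivisorsOn B B ⊆ zeroDivisorsOn B (B ⊗[R] M) := by
  rintro f ⟨g, hg, hfg⟩
  obtain ⟨r, hr, hann⟩ := hMcCoy f g hfg hg
  -- content of f consists of zero-divisors on M
  have hsub : ((algContent R B f : Ideal R) : Set R) ⊆ zeroDivisorsOn R M := by
    intro a ha
    exact hM ⟨r, hr, by rw [smul_eq_mul]; exact hann a ha⟩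
  obtain ⟨m, hm, hms⟩ := hA _ (hFG f) hsub
  refine ⟨(1 : B) ⊗ₜ[R] m, one_tmul_ne_zero R M B hff hm, ?_⟩
  -- f • (1 ⊗ m) = f ⊗ m = 0 since f ∈ c(f)B and c(f) • m = 0
  have key : ∀ x ∈ Ideal.map (algebraMap R B) (algContent R B f), x ⊗ₜ[R] m = 0 := by
    intro x hx
    refine Submodule.span_induction ?_ ?_ ?_ ?_ hx
    · rintro y ⟨a, ha, rfl⟩
      have : (algebraMap R B a) ⊗ₜ[R] m = (1 : B) ⊗ₜ[R] (a • m) := by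
        rw [Algebra.algebraMap_eq_smul_one, smul_tmul]
      rw [this, hms a ha, tmul_zero]
    · exact zero_tmul _ _
    · intro x y _ _ hx hy
      rw [add_tmul, hx, hy, add_zero]
    · intro b x _ hx
      rw [← smul_tmul', hx, smul_zero]
  have : f ⊗ₜ[R] m = 0 := key f (hOhmRush f)
  show f • ((1 : B) ⊗ₜ[R] m) = 0
  rw [smul_tmul', smul_eq_mul, mul_one, this]
end

section
/- Let R be a commutative ring having property (A) (as a module over itself) and M an R-module. Then the polynomial module M[X], viewed as a module over the polynomial ring R[X], is a torsion-free R[X]-module if and only if M is a torsion-free R-module. -/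
open Polynomial

lemma polyMod_coeff_smul {R : Type*} [CommRing R] {M : Type*} [AddCommGroup M] [Module R M]
    (c : R) (p : PolynomialModule R M) (j : ℕ) : (c • p).coeff j = c • p.coeff j := rfl

/-- McCoy's theorem for modules: if a polynomial `f` kills a nonzero element of `M[X]`,
then there is a nonzero element of `M` killed by all coefficients of `f`. -/
lemma mccoy_aux (R : Type*) [CommRing R] (M : Type*) [AddCommGroup M] [Module R M]
    (f : R[X]) : ∀ d : ℕ, ∀ p : PolynomialModule R M, (∀ j, d < j → p.coeff j = 0) →
    p ≠ 0 → f • p = 0 → ∃ m : M, m ≠ 0 ∧ ∀ n, f.coeff n • m = 0 := by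
  intro d
  induction d using Nat.strong_induction_on with
  | _ d IH =>
    classical
    intro p hbd hp hfp
    by_cases hall : ∀ i, f.coeff i • p = 0
    · obtain ⟨k, hk⟩ : ∃ n, p.coeff n ≠ 0 := by
        by_contra hc; push_neg at hc; exact hp (PolynomialModule.ext (Finsupp.ext hc))
      refine ⟨p.coeff k, hk, fun n => ?_⟩
      have := congrArg (fun q : PolynomialModule R M => q.coeff k) (hall n)
      simpa [Finsupp.smul_apply, polyMod_coeff_smul] using this
    · push_neg at hall
      obtain ⟨i₀, hi₀⟩ := hall
      have hi₀' : f.coeff i₀ ≠ 0 := by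
        intro h; exact hi₀ (by rw [h, zero_smul])
      -- `N` : the largest index with `f.coeff N • p ≠ 0`
      set N := Nat.findGreatest (fun i => f.coeff i • p ≠ 0) f.natDegree with hN
      have hNp : f.coeff N • p ≠ 0 := by
        have := Nat.findGreatest_spec (P := fun i => f.coeff i • p ≠ 0)
          (le_natDegree_of_ne_zero hi₀') hi₀
        exact this
      have hgtN : ∀ i, N < i → f.coeff i • p = 0 := by
        intro i hi
        by_cases hid : i ≤ f.natDegree
        · by_contra hne
          exact Nat.findGreatest_is_greatest (P := fun i => f.coeff i • p ≠ 0) hi hid hne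
        · rw [coeff_eq_zero_of_natDegree_lt (not_le.mp hid), zero_smul]
      -- `D` : the largest index with `p D ≠ 0`
      obtain ⟨k, hk⟩ : ∃ n, p.coeff n ≠ 0 := by
        by_contra hc; push_neg at hc; exact hp (PolynomialModule.ext (Finsupp.ext hc))
      have hkd : k ≤ d := by
        by_contra h; exact hk (hbd k (not_le.mp h))
      set D := Nat.findGreatest (fun j => p.coeff j ≠ 0) d with hD
      have hpD : p.coeff D ≠ 0 := by
        have := Nat.findGreatest_spec (P := fun j => p.coeff j ≠ 0) hkd hk
        exact this
      have hDd : D ≤ d := Nat.findGreatest_le d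
      have hgtD : ∀ j, D < j → p.coeff j = 0 := by
        intro j hj
        by_cases hjd : j ≤ d
        · by_contra hne
          exact Nat.findGreatest_is_greatest (P := fun j => p.coeff j ≠ 0) hj hjd hne
        · exact hbd j (not_le.mp hjd)
      -- key step : `f.coeff N • p D = 0`
      have hside : ∀ b ∈ Finset.HasAntidiagonal.antidiagonal (N + D), b ≠ (N, D) →
          f.coeff b.1 • p.coeff b.2 = 0 := by
        rintro ⟨i, j⟩ hmem hne
        rw [Finset.HasAntidiagonal.mem_antidiagonal] at hmem
        rcases lt_trichotomy j D with hj | hj | hj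
        · have hiN : N < i := by omega
          have := congrArg (fun q : PolynomialModule R M => q.coeff j) (hgtN i hiN)
          simpa [Finsupp.smul_apply, polyMod_coeff_smul] using this
        · exact absurd (by simp only [Prod.mk.injEq]; omega) hne
        · rw [hgtD j hj, smul_zero]
      have hkey : f.coeff N • p.coeff D = 0 := by
        have h0 : (f • p).coeff (N + D) = 0 := by rw [hfp]; rfl
        rw [PolynomialModule.smul_apply, Finset.sum_eq_single_of_mem (N, D)
          (Finset.HasAntidiagonal.mem_antidiagonal.mpr rfl) hside] at h0
        exact h0
      -- `q := f.coeff N • p` kills `f` and has smaller degree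
      set q : PolynomialModule R M := f.coeff N • p with hq
      have hqapp : ∀ j, q.coeff j = f.coeff N • p.coeff j := fun j => Finsupp.smul_apply _ _ _
      have hqbd : ∀ j, D - 1 < j → q.coeff j = 0 := by
        intro j hj
        rcases eq_or_lt_of_le (show D ≤ j by omega) with h | h
        · rw [hqapp, ← h, hkey]
        · rw [hqapp, hgtD j h, smul_zero]
      have hqD0 : q.coeff D = 0 := by rw [hqapp, hkey]
      have hD0 : 0 < D := by
        by_contra hD0
        obtain ⟨k', hk'⟩ : ∃ n, q.coeff n ≠ 0 := by
          by_contra hc; push_neg at hc; exact hNp (PolynomialModule.ext (Finsupp.ext hc))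
        rcases Nat.eq_zero_or_pos k' with h | h
        · exact hk' (by rw [h, show (0 : ℕ) = D by omega]; exact hqD0)
        · exact hk' (hqbd k' (by omega))
      have hfq : f • q = 0 := by
        rw [hq, ← algebraMap_smul (Polynomial R) (f.coeff N) p, smul_smul, mul_comm,
          ← smul_smul, hfp, smul_zero]
      exact IH (D - 1) (by omega) q hqbd hNp hfq

/-- If `R` has property (A), then `M[X]` is a torsion-free `R[X]`-module iff `M` is a
torsion-free `R`-module. -/
theorem polynomialModule_torsionFree_iff (R : Type*) [CommRing R]
    (M : Type*) [AddCommGroup M] [Module R M]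
    (hA : hasPropertyA R R) :
    (zeroDivisorsOn (Polynomial R) (PolynomialModule R M) ⊆
        zeroDivisorsOn (Polynomial R) (Polynomial R)) ↔
      zeroDivisorsOn R M ⊆ zeroDivisorsOn R R := by
  classical
  constructor
  · intro h r hr
    obtain ⟨m, hm, hrm⟩ := hr
    have hmem : (C r : R[X]) ∈ zeroDivisorsOn (Polynomial R) (PolynomialModule R M) := by
      refine ⟨PolynomialModule.single R 0 m, ?_, ?_⟩
      · intro hc
        apply hm
        have := congrArg (fun q : PolynomialModule R M => q.coeff 0) hc
        simpa [PolynomialModule.single_apply] using this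
      · refine PolynomialModule.ext (Finsupp.ext fun n => ?_)
        show (C r • PolynomialModule.single R 0 m).coeff n = 0
        rw [PolynomialModule.smul_single_apply]
        rcases eq_or_ne n 0 with hn | hn
        · simp [hn, hrm]
        · simp [coeff_C, hn]
    obtain ⟨g, hg, hCg⟩ := h hmem
    obtain ⟨k, hk⟩ : ∃ k, g.coeff k ≠ 0 := by
      by_contra hc; push_neg at hc; exact hg (Polynomial.ext hc)
    refine ⟨g.coeff k, hk, ?_⟩
    have hck : (C r * g).coeff k = 0 := by
      rw [show C r * g = 0 from hCg]; simp
    rw [coeff_C_mul] at hck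
    simpa using hck
  · intro h f hf
    obtain ⟨p, hp, hfp⟩ := hf
    -- McCoy: a nonzero `m : M` killed by all coefficients of `f`
    obtain ⟨m, hm, hcm⟩ := mccoy_aux R M f (p.coeff.support.sup id) p
      (fun j hj => by
        by_contra hc
        have := Finset.le_sup (f := id) (Finsupp.mem_support_iff.mpr hc)
        simp only [id_eq] at this
        omega)
      hp hfp
    -- the content ideal of `f`
    set I : Ideal R := Ideal.span (↑(f.support.image f.coeff) : Set R) with hI
    have hIm : ∀ s ∈ I, s • m = 0 := by
      intro s hs
      refine Submodule.span_induction ?_ ?_ ?_ ?_ hs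
      · rintro x hx
        simp only [Finset.coe_image, Set.mem_image] at hx
        obtain ⟨n, _, rfl⟩ := hx
        exact hcm n
      · exact zero_smul R m
      · intro x y _ _ hx hy; rw [add_smul, hx, hy, add_zero]
      · intro c x _ hx; rw [smul_eq_mul, mul_smul, hx, smul_zero]
    have hIZ : (I : Set R) ⊆ zeroDivisorsOn R R := fun s hs => h ⟨m, hm, hIm s hs⟩
    obtain ⟨r, hr, hrI⟩ := hA I ⟨f.support.image f.coeff, rfl⟩ hIZ
    refine ⟨C r, fun hc => hr (by simpa using congrArg (fun g => Polynomial.coeff g 0) hc), ?_⟩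
    rw [smul_eq_mul]
    ext n
    rw [coeff_mul_C, coeff_zero]
    rcases eq_or_ne (f.coeff n) 0 with hn | hn
    · rw [hn, zero_mul]
    · have hmemI : f.coeff n ∈ I := Ideal.subset_span (by
        simp only [Finset.coe_image, Set.mem_image]
        exact ⟨n, Finsupp.mem_support_iff.mpr hn, rfl⟩)
      have := hrI _ hmemI
      rwa [smul_eq_mul] at this
end

section
/- Let R be a commutative ring and S a multiplicatively closed subset of R consisting of non-zero-divisors of R (i.e., S ⊆ R − Z_R(R)). Then, viewing the localization R_S as an R-module, Z_R(R_S) = Z_R(R); in particular, R_S is both torsion-free and Auslander as an R-module. -/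
/-- If `S` consists of non-zero-divisors of `R`, then `Z_R(R_S) = Z_R(R)`; in particular,
`R_S` is a torsion-free Auslander `R`-module. -/
theorem localization_zeroDivisors_eq (R : Type*) [CommRing R]
    (S : Submonoid R) (hS : ∀ s ∈ S, s ∉ zeroDivisorsOn R R) :
    zeroDivisorsOn R (Localization S) = zeroDivisorsOn R R := by
  have hle : S ≤ nonZeroDivisors R := by
    intro s hs
    rw [mem_nonZeroDivisors_iff_right]
    intro x hx
    by_contra hx0
    exact hS s hs ⟨x, hx0, by rw [smul_eq_mul, mul_comm]; exact hx⟩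
  have hinj : Function.Injective (algebraMap R (Localization S)) :=
    IsLocalization.injective (Localization S) hle
  have hmk0 : ∀ (b : R) (s : S), Localization.mk b s = 0 → b = 0 := by
    intro b s h
    have h1 : Localization.mk b 1 = Localization.mk (s : R) 1 * Localization.mk b s := by
      rw [Localization.mk_mul]
      rw [Localization.mk_eq_mk_iff, Localization.r_iff_exists]
      exact ⟨1, by push_cast; ring⟩
    have h2 : (Localization.mk b 1 : Localization S) = 0 := by rw [h1, h, mul_zero]
    have : (algebraMap R (Localization S)) b = 0 := by
      rw [← Localization.mk_one_eq_algebraMap]; exact h2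
    exact hinj (by rw [this, map_zero])
  ext r
  simp only [zeroDivisorsOn, Set.mem_setOf_eq]
  constructor
  · rintro ⟨x, hx0, hrx⟩
    induction x using Localization.ind with
    | _ p =>
      obtain ⟨a, s⟩ := p
      rw [Localization.smul_mk] at hrx
      refine ⟨a, fun h => hx0 ?_, hmk0 _ _ hrx⟩
      rw [h, Localization.mk_zero]
  · rintro ⟨a, ha0, hra⟩
    refine ⟨Localization.mk a 1, ?_, ?_⟩
    · intro h
      exact ha0 (hmk0 _ _ h)
    · rw [Localization.smul_mk, hra, Localization.mk_zero]
end

section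
/- Let R be a commutative Noetherian ring and M a finitely generated flat R-module with Ann_R(M) = (0). Then the R-module Hom_R(M, M) is both torsion-free and Auslander, i.e., Z_R(Hom_R(M, M)) = Z_R(R). -/
/-- Over a Noetherian ring, for a finitely generated flat module `M` with trivial
annihilator, `Hom_R(M, M)` is torsion-free and Auslander. -/
theorem hom_torsionFree_auslander (R : Type*) [CommRing R] [IsNoetherianRing R]
    (M : Type*) [AddCommGroup M] [Module R M] [Module.Finite R M] [Module.Flat R M]
    (hann : Module.annihilator R M = ⊥) :
    zeroDivisorsOn R (M →ₗ[R] M) = zeroDivisorsOn R R := by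
  ext r
  constructor
  · rintro ⟨f, hf, hrf⟩
    -- find x with f x ≠ 0
    by_contra hr
    have hreg : IsSMulRegular R r := by
      intro a b hab
      by_contra hne
      exact hr ⟨a - b, sub_ne_zero.mpr hne, by simp only [smul_eq_mul] at hab; rw [smul_eq_mul, mul_sub, hab, sub_self]⟩
    have hregM : IsSMulRegular M r :=
      ((TensorProduct.rid R M).symm.isSMulRegular_congr r).mpr (hreg.lTensor M)
    apply hf
    ext x
    have : r • f x = 0 := by
      have := congrArg (fun g : M →ₗ[R] M => g x) hrf
      simpa using this
    simpa using hregM (by simpa using this : r • f x = r • (0 : M))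
  · rintro ⟨s, hs, hrs⟩
    refine ⟨s • LinearMap.id, ?_, ?_⟩
    · intro h
      apply hs
      rw [← Ideal.mem_bot, ← hann, Module.mem_annihilator]
      intro m
      have := congrArg (fun g : M →ₗ[R] M => g m) h
      simpa using this
    · rw [smul_smul]
      have : r * s = 0 := by simpa [smul_eq_mul] using hrs
      simp [this]
end

section
/- Let R be a commutative ring, M a flat Auslander R-module, and M′ any flat R-module. Then M ⊕ M′ is both torsion-free and Auslander as an R-module, i.e., Z_R(M ⊕ M′) = Z_R(R). -/
lemma flat_regular (R : Type*) [CommRing R] (M : Type*) [AddCommGroup M] [Module R M]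
    [Module.Flat R M] {r : R} (h : IsSMulRegular R r) : IsSMulRegular M r :=
  ((TensorProduct.lid R M).isSMulRegular_congr r).mp (h.rTensor M)

/-- If `M` is a flat Auslander module and `M'` is flat, then `M ⊕ M'` is torsion-free
and Auslander. -/
theorem prod_flat_torsionFree_auslander (R : Type*) [CommRing R]
    (M : Type*) [AddCommGroup M] [Module R M] [Module.Flat R M]
    (M' : Type*) [AddCommGroup M'] [Module R M'] [Module.Flat R M']
    (hM : zeroDivisorsOn R R ⊆ zeroDivisorsOn R M) :
    zeroDivisorsOn R (M × M') = zeroDivisorsOn R R := by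
  ext r
  constructor
  · rintro ⟨⟨m, m'⟩, hne, hsm⟩
    by_contra hr
    have hreg : IsSMulRegular R r := by
      intro a b hab
      by_contra hab'
      exact hr ⟨a - b, sub_ne_zero.mpr hab', by
        rw [smul_eq_mul, mul_sub, sub_eq_zero]; exact hab⟩
    have h1 : IsSMulRegular M r := flat_regular R M hreg
    have h2 : IsSMulRegular M' r := flat_regular R M' hreg
    have hm : m = 0 := h1 (by simpa using congrArg Prod.fst hsm)
    have hm' : m' = 0 := h2 (by simpa using congrArg Prod.snd hsm)
    exact hne (by simp [hm, hm', Prod.ext_iff])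
  · intro hr
    obtain ⟨m, hm, hsm⟩ := hM hr
    exact ⟨(m, 0), by simp [Prod.ext_iff, hm], by simp [Prod.ext_iff, hsm]⟩
end

section
/- Let R be a commutative ring, M a flat Auslander R-module having property (A), and B a commutative R-algebra that is faithfully flat as an R-module. For f ∈ B, define the content c(f) to be the intersection of all ideals I of R such that f ∈ IB. Assume: (i) B is an Ohm-Rush R-algebra, i.e., f ∈ c(f)B for every f ∈ B; (ii) c(f) is a finitely generated ideal of R for every f ∈ B; (iii) B is a McCoy R-algebra, i.e., whenever f·g = 0 in B with g ≠ 0, there is a nonzero r ∈ R with c(f)·r = (0). Then the B-module M ⊗_R B is both torsion-free and Auslander, i.e., Z_B(M ⊗_R B) = Z_B(B). -/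
open TensorProduct

lemma one_tmul_eq_zero_iff (R : Type*) [CommRing R]
    (M : Type*) [AddCommGroup M] [Module R M]
    (B : Type*) [CommRing B] [Algebra R B] [Module.FaithfullyFlat R B]
    {m : M} (h : (1 : B) ⊗ₜ[R] m = 0) : m = 0 := by
  have hzero : LinearMap.lTensor B (LinearMap.toSpanSingleton R M m) = 0 := by
    apply TensorProduct.ext'
    intro b r
    have h1 : (LinearMap.lTensor B (LinearMap.toSpanSingleton R M m)) (b ⊗ₜ r)
        = b ⊗ₜ (r • m) := rfl
    have h2 : b ⊗ₜ[R] (r • m) = (r • b) • ((1:B) ⊗ₜ[R] m) := by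
      rw [TensorProduct.smul_tmul', smul_eq_mul, mul_one, TensorProduct.smul_tmul]
    rw [h1, h2, h, smul_zero]; rfl
  have := (Module.FaithfullyFlat.zero_iff_lTensor_zero R B
    (LinearMap.toSpanSingleton R M m)).mpr hzero
  simpa using congrArg (fun f => f 1) this


/-- If `M` is a flat Auslander `R`-module with property (A) and `B` is a faithfully flat
McCoy (Ohm-Rush) `R`-algebra, then `M ⊗_R B` is a torsion-free Auslander `B`-module. -/
theorem tensor_torsionFree_auslander (R : Type*) [CommRing R]
    (M : Type*) [AddCommGroup M] [Module R M] [Module.Flat R M]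
    (B : Type*) [CommRing B] [Algebra R B]
    (hM : zeroDivisorsOn R R ⊆ zeroDivisorsOn R M)
    (hA : hasPropertyA R M)
    (hff : Module.FaithfullyFlat R B)
    (hOhmRush : ∀ f : B, f ∈ Ideal.map (algebraMap R B) (algContent R B f))
    (hFG : ∀ f : B, (algContent R B f).FG)
    (hMcCoy : ∀ f g : B, f * g = 0 → g ≠ 0 →
      ∃ r : R, r ≠ 0 ∧ ∀ a ∈ algContent R B f, a * r = 0) :
    zeroDivisorsOn B (B ⊗[R] M) = zeroDivisorsOn B B := by
  apply Set.eq_of_subset_of_subset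
  · -- torsion-free: flatness
    rintro f ⟨t, ht, hft⟩
    by_contra hf
    -- f is regular on B
    have hreg : Function.Injective (LinearMap.mulLeft R f) := by
      rw [injective_iff_map_eq_zero]
      intro g hg
      by_contra hg0
      exact hf ⟨g, hg0, hg⟩
    have hinj : Function.Injective
        (LinearMap.rTensor M (LinearMap.mulLeft R f)) :=
      Module.Flat.rTensor_preserves_injective_linearMap _ hreg
    have key : ∀ x : B ⊗[R] M, LinearMap.rTensor M (LinearMap.mulLeft R f) x = f • x := by
      intro x
      induction x using TensorProduct.induction_on with
      | zero => simp
      | tmul b m => simp [TensorProduct.smul_tmul', smul_eq_mul]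
      | add x y hx hy => simp [hx, hy]
    apply ht
    apply hinj
    rw [key, hft, map_zero]
  · -- Auslander
    rintro f ⟨g, hg, hfg⟩
    rw [smul_eq_mul] at hfg
    obtain ⟨r, hr, hcr⟩ := hMcCoy f g hfg hg
    have hsub : ((algContent R B f : Ideal R) : Set R) ⊆ zeroDivisorsOn R M := by
      intro a ha
      apply hM
      exact ⟨r, hr, by rw [smul_eq_mul]; exact hcr a ha⟩
    obtain ⟨m, hm, hann⟩ := hA _ (hFG f) hsub
    refine ⟨(1 : B) ⊗ₜ[R] m, fun h => hm (one_tmul_eq_zero_iff R M B h), ?_⟩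
    -- f ∈ c(f)B, and every generator kills 1 ⊗ m
    have key : ∀ x ∈ Submodule.span B
        ((algebraMap R B) '' ((algContent R B f : Ideal R) : Set R)),
        x • ((1 : B) ⊗ₜ[R] m) = 0 := by
      intro x hx
      induction hx using Submodule.span_induction with
      | mem y hy =>
        obtain ⟨a, ha, rfl⟩ := hy
        rw [algebraMap_smul, ← TensorProduct.tmul_smul, hann a ha, TensorProduct.tmul_zero]
      | zero => rw [zero_smul]
      | add x y _ _ hx hy => rw [add_smul, hx, hy, add_zero]
      | smul b x _ hx => rw [smul_eq_mul, mul_smul, hx, smul_zero]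
    exact key f (hOhmRush f)
end

section
/- Let R be a commutative ring having property (A) (as a module over itself) and M an R-module having property (A). Then the polynomial module M[X], viewed as a module over the polynomial ring R[X], is a torsion-free Auslander R[X]-module if and only if M is a torsion-free Auslander R-module; that is, Z_{R[X]}(M[X]) = Z_{R[X]}(R[X]) if and only if Z_R(M) = Z_R(R). -/
open Polynomial

section Aux

variable {R M : Type*} [CommRing R] [AddCommGroup M] [Module R M]

lemma pm_rsmul_apply (r : R) (Q : PolynomialModule R M) (j : ℕ) : (r • Q).coeff j = r • Q.coeff j := rfl

lemma pm_Csmul (r : R) (G : PolynomialModule R M) : (C r : R[X]) • G = r • G := by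
  have h : (C r : R[X]) = r • (1 : R[X]) := by rw [smul_eq_C_mul, mul_one]
  rw [h, smul_assoc, one_smul]

lemma pm_exists_bound (Q : PolynomialModule R M) : ∃ n : ℕ, ∀ j, n < j → Q.coeff j = 0 := by
  refine ⟨Q.coeff.support.sup id, fun j hj => ?_⟩
  by_contra h
  have : j ∈ Q.coeff.support := Finsupp.mem_support_iff.2 h
  exact absurd (Finset.le_sup (f := id) this) (not_le.2 hj)

/-- McCoy's theorem for modules: if a polynomial `P` kills a nonzero element of `M[X]`,
then all its coefficients kill a common nonzero element of `M`. -/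
lemma mccoy_module (P : R[X]) :
    ∀ n : ℕ, ∀ Q : PolynomialModule R M, Q ≠ 0 → (∀ j, n < j → Q.coeff j = 0) →
      P • Q = 0 → ∃ m : M, m ≠ 0 ∧ ∀ i, P.coeff i • m = 0 := by
  intro n
  induction n using Nat.strong_induction_on with
  | _ n IH =>
  intro Q hQ hbd hPQ
  classical
  -- d : largest index with Q d ≠ 0
  have hQex : ∃ j, Q.coeff j ≠ 0 := by
    by_contra h
    push_neg at h
    exact hQ (PolynomialModule.ext (Finsupp.ext fun j => h j))
  set S : Finset ℕ := (Finset.range (n + 1)).filter (fun j => Q.coeff j ≠ 0) with hS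
  have hSne : S.Nonempty := by
    obtain ⟨j, hj⟩ := hQex
    refine ⟨j, Finset.mem_filter.2 ⟨Finset.mem_range.2 ?_, hj⟩⟩
    by_contra hc
    exact hj (hbd j (by omega))
  set d := S.max' hSne with hd
  have hdmem := S.max'_mem hSne
  have hQd : Q.coeff d ≠ 0 := (Finset.mem_filter.1 hdmem).2
  have hdn : d ≤ n := by
    have h2 := Finset.mem_range.1 (Finset.mem_filter.1 hdmem).1
    omega
  have hQtop : ∀ j, d < j → Q.coeff j = 0 := by
    intro j hj
    by_contra h
    have hjn : j < n + 1 := by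
      by_contra hc
      exact h (hbd j (by omega))
    have : j ∈ S := Finset.mem_filter.2 ⟨Finset.mem_range.2 hjn, h⟩
    exact absurd (S.le_max' j this) (not_le.2 hj)
  by_cases hall : ∀ i, P.coeff i • Q = 0
  · refine ⟨Q.coeff d, hQd, fun i => ?_⟩
    have := congrArg (fun (q : PolynomialModule R M) => q.coeff d) (hall i)
    simpa [pm_rsmul_apply] using this
  · push_neg at hall
    set T : Finset ℕ := (Finset.range (P.natDegree + 1)).filter (fun i => P.coeff i • Q ≠ 0)
      with hT
    have hTne : T.Nonempty := by
      obtain ⟨i, hi⟩ := hall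
      refine ⟨i, Finset.mem_filter.2 ⟨Finset.mem_range.2 ?_, hi⟩⟩
      by_contra hc
      have : P.coeff i = 0 := coeff_eq_zero_of_natDegree_lt (by omega)
      exact hi (by simp [this])
    set l := T.max' hTne with hl
    have hlmem := T.max'_mem hTne
    have hlQ : P.coeff l • Q ≠ 0 := (Finset.mem_filter.1 hlmem).2
    have hltop : ∀ i, l < i → P.coeff i • Q = 0 := by
      intro i hi
      by_contra h
      have hin : i < P.natDegree + 1 := by
        by_contra hc
        have : P.coeff i = 0 := coeff_eq_zero_of_natDegree_lt (by omega)
        exact h (by simp [this])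
      have : i ∈ T := Finset.mem_filter.2 ⟨Finset.mem_range.2 hin, h⟩
      exact absurd (T.le_max' i this) (not_le.2 hi)
    -- key : P.coeff l • Q d = 0
    have hkey : P.coeff l • Q.coeff d = 0 := by
      have h1 : (P • Q).coeff (l + d) = P.coeff l • Q.coeff d := by
        rw [PolynomialModule.smul_apply]
        refine Finset.sum_eq_single (l, d) ?_ (by simp [Finset.mem_antidiagonal])
        rintro ⟨i, j⟩ hij hne
        have hij' : i + j = l + d := Finset.HasAntidiagonal.mem_antidiagonal.1 hij
        rcases lt_trichotomy i l with hi | hi | hi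
        · have : d < j := by omega
          rw [hQtop j this, smul_zero]
        · exact absurd (by omega : j = d) (fun hj => hne (by simp [hi, hj]))
        · have := congrArg (fun (q : PolynomialModule R M) => q.coeff j) (hltop i hi)
          simpa [pm_rsmul_apply] using this
      rw [hPQ] at h1
      simpa using h1.symm
    -- Q' = P.coeff l • Q is nonzero, killed by P, with strictly smaller support bound
    have hQ'bd : ∀ j, d - 1 < j → (P.coeff l • Q).coeff j = 0 := by
      intro j hj
      rcases eq_or_lt_of_le (show d ≤ j by omega) with h | h
      · rw [pm_rsmul_apply, ← h, hkey]
      · rw [pm_rsmul_apply, hQtop j h, smul_zero]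
    have hdpos : 0 < d := by
      rcases Nat.eq_zero_or_pos d with h0 | h0
      · exfalso
        refine hlQ (PolynomialModule.ext (Finsupp.ext fun j => ?_))
        rw [PolynomialModule.coeff_zero, Finsupp.zero_apply]
        rcases Nat.eq_zero_or_pos j with hj | hj
        · rw [hj, pm_rsmul_apply, ← h0, hkey]
        · exact hQ'bd j (by omega)
      · exact h0
    have hPQ' : P • (P.coeff l • Q) = 0 := by
      rw [← pm_Csmul, ← mul_smul, mul_comm, mul_smul, pm_Csmul, hPQ, smul_zero]
    exact IH (d - 1) (by omega) (P.coeff l • Q) hlQ hQ'bd hPQ'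

lemma span_kills {m : M} (S : Set R) (h : ∀ s ∈ S, s • m = 0) :
    ∀ x ∈ Ideal.span S, x • m = 0 := by
  intro x hx
  refine Submodule.span_induction h (by simp)
    (fun a b _ _ ha hb => by rw [add_smul, ha, hb, add_zero])
    (fun r a _ ha => by rw [smul_eq_mul, mul_smul, ha, smul_zero]) hx

lemma coeff_mem_span_coeffs (f : R[X]) (n : ℕ) :
    f.coeff n ∈ Ideal.span (↑f.coeffs : Set R) := by
  by_cases h : f.coeff n = 0
  · rw [h]; exact Ideal.zero_mem _
  · exact Ideal.subset_span (Polynomial.coeff_mem_coeffs h)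

lemma single_zero_ne_zero {m : M} (hm : m ≠ 0) : PolynomialModule.single R 0 m ≠ 0 := by
  intro h
  apply hm
  have := congrArg (fun q : PolynomialModule R M => q.coeff 0) h
  simpa [Finsupp.single_apply] using this

end Aux

/-- If both `R` and `M` have property (A), then `M[X]` is a torsion-free Auslander
`R[X]`-module iff `M` is a torsion-free Auslander `R`-module. -/
theorem polynomialModule_torsionFree_auslander_iff (R : Type*) [CommRing R]
    (M : Type*) [AddCommGroup M] [Module R M]
    (hAR : hasPropertyA R R) (hAM : hasPropertyA R M) :
    zeroDivisorsOn (Polynomial R) (PolynomialModule R M) =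
        zeroDivisorsOn (Polynomial R) (Polynomial R) ↔
      zeroDivisorsOn R M = zeroDivisorsOn R R := by
  constructor
  · -- equality of poly zero-divisor sets implies equality downstairs (no property (A) needed)
    intro hpoly
    ext r
    simp only [zeroDivisorsOn, Set.mem_setOf_eq]
    constructor
    · rintro ⟨m, hm, hrm⟩
      have hCr : (C r : R[X]) ∈ zeroDivisorsOn (Polynomial R) (PolynomialModule R M) := by
        refine ⟨PolynomialModule.single R 0 m, single_zero_ne_zero hm, ?_⟩
        rw [pm_Csmul, ← PolynomialModule.single_smul, hrm, PolynomialModule.single_zero]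
      rw [hpoly] at hCr
      obtain ⟨g, hg, hCrg⟩ := hCr
      have : ∃ j, g.coeff j ≠ 0 := by
        by_contra h
        push_neg at h
        exact hg (Polynomial.ext h)
      obtain ⟨j, hj⟩ := this
      refine ⟨g.coeff j, hj, ?_⟩
      have := congrArg (fun p : R[X] => p.coeff j) hCrg
      simpa [smul_eq_mul, coeff_C_mul] using this
    · rintro ⟨a, ha, hra⟩
      have hCr : (C r : R[X]) ∈ zeroDivisorsOn (Polynomial R) (Polynomial R) := by
        refine ⟨C a, fun h => ha (C_eq_zero.1 h), ?_⟩
        rw [smul_eq_mul, ← C_mul, show r * a = r • a from rfl, hra, map_zero]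
      rw [← hpoly] at hCr
      obtain ⟨G, hG, hCrG⟩ := hCr
      have : ∃ j, G.coeff j ≠ 0 := by
        by_contra h
        push_neg at h
        exact hG (PolynomialModule.ext (Finsupp.ext fun j => h j))
      obtain ⟨j, hj⟩ := this
      refine ⟨G.coeff j, hj, ?_⟩
      have := congrArg (fun q : PolynomialModule R M => q.coeff j) hCrG
      rw [pm_Csmul] at this
      simpa [pm_rsmul_apply] using this
  · -- equality downstairs implies equality of poly zero-divisor sets
    intro hbase
    ext f
    simp only [zeroDivisorsOn, Set.mem_setOf_eq]
    constructor
    · rintro ⟨G, hG, hfG⟩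
      obtain ⟨n, hn⟩ := pm_exists_bound G
      obtain ⟨m, hm, hcoeff⟩ := mccoy_module f n G hG hn hfG
      set I : Ideal R := Ideal.span (↑f.coeffs : Set R) with hI
      have hIkill : ∀ x ∈ I, x • m = 0 := by
        refine span_kills _ fun s hs => ?_
        obtain ⟨k, -, rfl⟩ := Polynomial.mem_coeffs_iff.1 hs
        exact hcoeff k
      have hIZ : (I : Set R) ⊆ zeroDivisorsOn R R := by
        intro x hx
        rw [← hbase]
        exact ⟨m, hm, hIkill x hx⟩
      obtain ⟨a, ha, haI⟩ := hAR I (Submodule.fg_span (Finset.finite_toSet _)) hIZ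
      refine ⟨C a, fun h => ha (C_eq_zero.1 h), ?_⟩
      rw [smul_eq_mul]
      ext j
      rw [coeff_mul_C, coeff_zero, ← smul_eq_mul]
      exact haI _ (coeff_mem_span_coeffs f j)
    · rintro ⟨g, hg, hfg⟩
      rw [smul_eq_mul] at hfg
      have hf : f ∉ nonZeroDivisors (Polynomial R) := by
        intro hmem
        exact hg ((mem_nonZeroDivisors_iff.1 hmem).2 g (by rw [mul_comm, hfg]))
      obtain ⟨a, ha, haf⟩ := Polynomial.notMem_nonZeroDivisors_iff.1 hf
      set I : Ideal R := Ideal.span (↑f.coeffs : Set R) with hI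
      have hIkill : ∀ x ∈ I, x • a = 0 := by
        refine span_kills _ fun s hs => ?_
        obtain ⟨k, -, rfl⟩ := Polynomial.mem_coeffs_iff.1 hs
        have := congrArg (fun p : R[X] => p.coeff k) haf
        simp only [Polynomial.coeff_smul, coeff_zero, smul_eq_mul] at this
        rw [smul_eq_mul, mul_comm]
        exact this
      have hIZ : (I : Set R) ⊆ zeroDivisorsOn R M := by
        intro x hx
        rw [hbase]
        exact ⟨a, ha, hIkill x hx⟩
      obtain ⟨m, hm, hmI⟩ := hAM I (Submodule.fg_span (Finset.finite_toSet _)) hIZ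
      refine ⟨PolynomialModule.single R 0 m, single_zero_ne_zero hm, ?_⟩
      refine PolynomialModule.ext (Finsupp.ext fun j => ?_)
      rw [PolynomialModule.coeff_zero, Finsupp.zero_apply, PolynomialModule.smul_single_apply, if_pos (Nat.zero_le j)]
      exact hmI _ (coeff_mem_span_coeffs f (j - 0))
end
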